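/- Let G be a finite loopless multigraph and v₀ ∈ V(G). A multidegree D : V(G) → ℤ is concentrated at v₀ if and only if for every nonempty subset S ⊆ V(G)∖{v₀} there is some v ∈ S such that D(v) is strictly smaller than the number of edges from v to V(G)∖S. -/

import Mathlib

open scoped Classical

namespace LLS

variable {V E : Type*}

/-- `σ(e,v)`: `1` if `v` is the tail of `e`, `-1` if `v` is the head of `e`, `0` otherwise. -/
noncomputable def sigma (tail head : E → V) (e : E) (v : V) : ℤ :=
  if tail e = v then 1 else if head e = v then -1 else 0

/-- The endpoint of `e` other than `v` (for `e` adjacent to `v`). -/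
noncomputable def otherEnd (tail head : E → V) (e : E) (v : V) : V :=
  if tail e = v then head e else tail e

/-- The multigraph is loopless. -/
def Loopless (tail head : E → V) : Prop := ∀ e, tail e ≠ head e

/-- The multigraph is connected. -/
def MGConnected (tail head : E → V) : Prop :=
  ∀ u v : V, Relation.ReflTransGen
    (fun a b => ∃ e, (tail e = a ∧ head e = b) ∨ (tail e = b ∧ head e = a)) u v

/-- An admissible multidegree on `(Γ, 𝐧)`: a function `V(Γ) → ℤ` together with an
element `μ(e) ∈ ℤ/𝐧(e)ℤ` for each edge `e`. -/
structure AdmMD (V E : Type*) (n : E → ℕ) where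
  wV : V → ℤ
  mu : ∀ e : E, ZMod (n e)

section FinGraph

variable [Fintype V] [Fintype E] [DecidableEq V] [DecidableEq E]

/-- The twist of an admissible multidegree at a vertex `v`. -/
noncomputable def twist (tail head : E → V) (n : E → ℕ) (w : AdmMD V E n) (v : V) :
    AdmMD V E n where
  wV u := w.wV u
    - (if u = v then ((Finset.univ.filter fun e : E =>
        sigma tail head e v ≠ 0 ∧ w.mu e = 0).card : ℤ) else 0)
    + ((Finset.univ.filter fun e : E => sigma tail head e v ≠ 0 ∧
        w.mu e + (sigma tail head e v : ZMod (n e)) = 0 ∧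
        otherEnd tail head e v = u).card : ℤ)
  mu e := w.mu e + (sigma tail head e v : ZMod (n e))

/-- The negative twist of an admissible multidegree at a vertex `v`
(the inverse of `twist`). -/
noncomputable def negTwist (tail head : E → V) (n : E → ℕ) (w : AdmMD V E n) (v : V) :
    AdmMD V E n where
  wV u := w.wV u
    + (if u = v then ((Finset.univ.filter fun e : E => sigma tail head e v ≠ 0 ∧
        w.mu e - (sigma tail head e v : ZMod (n e)) = 0).card : ℤ) else 0)
    - ((Finset.univ.filter fun e : E => sigma tail head e v ≠ 0 ∧
        w.mu e = 0 ∧ otherEnd tail head e v = u).card : ℤ)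
  mu e := w.mu e - (sigma tail head e v : ZMod (n e))

/-- An admissible multidegree is concentrated at `v` if there is an ordering of all
vertices starting with `v` such that composing the negative twists at all previous
vertices makes the multidegree negative at each subsequent vertex. -/
def Concentrated (tail head : E → V) (n : E → ℕ) (w : AdmMD V E n) (v : V) : Prop :=
  ∃ l : List V, l.Nodup ∧ (∀ x : V, x ∈ l) ∧ l.head? = some v ∧
    ∀ (i : ℕ) (h : i < l.length), 0 < i →
      (((l.take i).foldl (negTwist tail head n) w).wV (l.get ⟨i, h⟩)) < 0

/-- `w` is obtained from `w₀` by a finite sequence of twists, i.e. `w ∈ V(G(w₀))`. -/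
def TwistSeq (tail head : E → V) (n : E → ℕ) (w₀ w : AdmMD V E n) : Prop :=
  ∃ l : List V, l.foldl (twist tail head n) w₀ = w

/-- `l` records the successive twist vertices of a minimal path from `w` to `w'`
in `G(w₀)`. -/
def IsMinPath (tail head : E → V) (n : E → ℕ) (w w' : AdmMD V E n) (l : List V) : Prop :=
  l.foldl (twist tail head n) w = w' ∧
    ∀ l' : List V, l'.foldl (twist tail head n) w = w' → l.length ≤ l'.length

/-- The membership condition describing the subgraph `Ḡ(w₀)` of `G(w₀)`:
no minimal path from `w` to `w_v` involves twisting at `v`. -/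
def InBarG (tail head : E → V) (n : E → ℕ) (w₀ : AdmMD V E n) (wv : V → AdmMD V E n)
    (w : AdmMD V E n) : Prop :=
  TwistSeq tail head n w₀ w ∧
    ∀ (v : V) (l : List V), IsMinPath tail head n w (wv v) l → v ∉ l

/-- Edges joining `v` and `u`. -/
noncomputable def edgesBetween (tail head : E → V) (v u : V) : Finset E :=
  Finset.univ.filter fun e => (tail e = v ∧ head e = u) ∨ (head e = v ∧ tail e = u)

/-- Edges adjacent to `v`. -/
noncomputable def edgesAdj (tail head : E → V) (v : V) : Finset E :=
  Finset.univ.filter fun e => tail e = v ∨ head e = v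

/-- The change of a divisor effected by a single chip-firing move at `v`. -/
noncomputable def fireDelta (tail head : E → V) (v : V) : V → ℤ := fun u =>
  ((edgesBetween tail head v u).card : ℤ)
    - (if u = v then ((edgesAdj tail head v).card : ℤ) else 0)

/-- A chip-firing move (twist) at `v`. -/
noncomputable def chipFire (tail head : E → V) (D : V → ℤ) (v : V) : V → ℤ :=
  fun u => D u + fireDelta tail head v u

/-- The inverse of a chip-firing move at `v`. -/
noncomputable def negChipFire (tail head : E → V) (D : V → ℤ) (v : V) : V → ℤ :=
  fun u => D u - fireDelta tail head v u

/-- A divisor (multidegree) on a graph is concentrated at `v`. -/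
def ConcentratedDiv (tail head : E → V) (D : V → ℤ) (v : V) : Prop :=
  ∃ l : List V, l.Nodup ∧ (∀ x : V, x ∈ l) ∧ l.head? = some v ∧
    ∀ (i : ℕ) (h : i < l.length), 0 < i →
      (((l.take i).foldl (negChipFire tail head) D) (l.get ⟨i, h⟩)) < 0

/-- A divisor on a graph is `v₀`-reduced. -/
def VReduced (tail head : E → V) (D : V → ℤ) (v₀ : V) : Prop :=
  (∀ u, u ≠ v₀ → 0 ≤ D u) ∧
    ∀ S : Finset V, S.Nonempty → v₀ ∉ S →
      ∃ v ∈ S, D v < ((Finset.univ.filter fun e : E =>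
        (tail e = v ∧ head e ∉ S) ∨ (head e = v ∧ tail e ∉ S)).card : ℤ)

/-- The function `D_{w,v}` on edges of `Γ` determined by a path `l` from `w` to `w_v`. -/
noncomputable def DFun (tail head : E → V) (n : E → ℕ) (w : AdmMD V E n) (l : List V)
    (v : V) (et : E) : ℤ :=
  (((Finset.univ : Finset (Fin l.length)).filter fun j =>
      l.get j = otherEnd tail head et v ∧
        ((l.take (j.val + 1)).foldl (twist tail head n) w).mu et = 0).card : ℤ)
  - (((Finset.univ : Finset (Fin l.length)).filter fun j =>
      l.get j = v ∧ ((l.take j.val).foldl (twist tail head n) w).mu et = 0).card : ℤ)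

end FinGraph

/-- The tail map of the subdivided graph `Γ̃`: the edge `e` of `Γ` is subdivided into
`𝐧(e)` edges `(e, j)`, `j = 0, …, 𝐧(e) - 1`, numbered from the tail of `e`; the new
vertices over `e` are `(e, i)`, `i = 0, …, 𝐧(e) - 2`, with `(e, i)` being the
`(i+1)`-st new vertex from the tail of `e`. -/
def tailT (tail head : E → V) (n : E → ℕ) :
    (Σ e : E, Fin (n e)) → V ⊕ Σ e : E, Fin (n e - 1) := fun p =>
  if h : p.2.val = 0 then Sum.inl (tail p.1)
  else Sum.inr ⟨p.1, ⟨p.2.val - 1, by have := p.2.isLt; omega⟩⟩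

/-- The head map of the subdivided graph `Γ̃`. -/
def headT (tail head : E → V) (n : E → ℕ) :
    (Σ e : E, Fin (n e)) → V ⊕ Σ e : E, Fin (n e - 1) := fun p =>
  if h : p.2.val = n p.1 - 1 then Sum.inl (head p.1)
  else Sum.inr ⟨p.1, ⟨p.2.val, by have := p.2.isLt; omega⟩⟩

/-- The multidegree on the subdivided graph `Γ̃` induced by an admissible multidegree:
it agrees with `w` on old vertices, is `1` on the `μ(e)`-th new vertex over `e`
when `μ(e) ≠ 0`, and is `0` on all other new vertices. -/
noncomputable def inducedMD (n : E → ℕ) (w : AdmMD V E n) :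
    (V ⊕ Σ e : E, Fin (n e - 1)) → ℤ
  | Sum.inl v => w.wV v
  | Sum.inr ⟨e, i⟩ => if (w.mu e).val = i.val + 1 then 1 else 0

/-- The simple graph `Γ̄` associated to the multigraph `Γ`: same vertices, one edge
between each pair of adjacent vertices. -/
def barGraph (tail head : E → V) : SimpleGraph V where
  Adj u v := u ≠ v ∧ ∃ e, (tail e = u ∧ head e = v) ∨ (tail e = v ∧ head e = u)
  symm := by
    constructor
    intro u v h
    exact ⟨h.1.symm, h.2.imp fun e he => he.symm⟩
  loopless := ⟨fun u h => h.1 rfl⟩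


section Statement3Aux

variable {V E : Type*} [Fintype V] [Fintype E] [DecidableEq V] [DecidableEq E]
variable (tail head : E → V)

lemma foldl_negChipFire_eq (l : List V) (D : V → ℤ) (v : V) :
    l.foldl (negChipFire tail head) D v
      = D v - (l.map (fun u => fireDelta tail head u v)).sum := by
  induction l generalizing D with
  | nil => simp
  | cons u t ih =>
    simp only [List.foldl_cons, ih, List.map_cons, List.sum_cons, negChipFire]
    ring

lemma sum_fireDelta_eq (v : V) (l : List V) (hnd : l.Nodup) (hv : v ∉ l) :
    (l.map (fun u => fireDelta tail head u v)).sum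
      = ((Finset.univ.filter fun e : E =>
          (tail e = v ∧ head e ∈ l) ∨ (head e = v ∧ tail e ∈ l)).card : ℤ) := by
  induction l with
  | nil => simp
  | cons u t ih =>
    have hvu : v ≠ u := fun h => hv (h ▸ (List.mem_cons_self : u ∈ u :: t))
    have hut : u ∉ t := (List.nodup_cons.mp hnd).1
    have hvt : v ∉ t := fun h => hv (List.mem_cons_of_mem u h)
    have hfd : fireDelta tail head u v = ((edgesBetween tail head u v).card : ℤ) := by
      simp [fireDelta, hvu]
    have hdisj : Disjoint (edgesBetween tail head u v)
        (Finset.univ.filter fun e : E =>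
          (tail e = v ∧ head e ∈ t) ∨ (head e = v ∧ tail e ∈ t)) := by
      rw [Finset.disjoint_left]
      intro e he1 he2
      simp only [edgesBetween, Finset.mem_filter, Finset.mem_univ, true_and] at he1 he2
      rcases he1 with ⟨h1, h2⟩ | ⟨h1, h2⟩ <;> rcases he2 with ⟨h3, h4⟩ | ⟨h3, h4⟩
      · exact hvu (h3 ▸ h1)
      · exact hut (h1 ▸ h4)
      · exact hut (h1 ▸ h4)
      · exact hvu (h3 ▸ h1)
    have hunion : (Finset.univ.filter fun e : E =>
        (tail e = v ∧ head e ∈ u :: t) ∨ (head e = v ∧ tail e ∈ u :: t))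
        = edgesBetween tail head u v ∪
          (Finset.univ.filter fun e : E =>
            (tail e = v ∧ head e ∈ t) ∨ (head e = v ∧ tail e ∈ t)) := by
      ext e
      simp only [edgesBetween, Finset.mem_filter, Finset.mem_univ, true_and,
        Finset.mem_union, List.mem_cons]
      tauto
    rw [List.map_cons, List.sum_cons, ih (List.nodup_cons.mp hnd).2 hvt, hfd,
      hunion, Finset.card_union_of_disjoint hdisj]
    push_cast
    ring

lemma foldl_negChipFire_val (l : List V) (D : V → ℤ) (v : V)
    (hnd : l.Nodup) (hv : v ∉ l) :
    l.foldl (negChipFire tail head) D v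
      = D v - ((Finset.univ.filter fun e : E =>
          (tail e = v ∧ head e ∈ l) ∨ (head e = v ∧ tail e ∈ l)).card : ℤ) := by
  rw [foldl_negChipFire_eq, sum_fireDelta_eq tail head v l hnd hv]

lemma get_not_mem_take (l : List V) (hnd : l.Nodup) (i : ℕ) (hi : i < l.length) :
    l.get ⟨i, hi⟩ ∉ l.take i := by
  intro hmem
  obtain ⟨j, hj, hget⟩ := List.mem_iff_getElem.mp hmem
  have hj' : j < i := by
    have := hj
    simp only [List.length_take] at this
    omega
  have hjl : j < l.length := lt_of_lt_of_le hj' (le_of_lt hi)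
  have hgl : l[j] = l[i] := by
    have h2 : (List.take i l)[j] = l[i] := hget
    rw [← h2]
    exact List.getElem_take.symm
  have := (List.Nodup.getElem_inj_iff hnd (hi := hjl) (hj := hi)).mp hgl
  omega

lemma exists_good_list (D : V → ℤ) (v₀ : V)
    (H : ∀ S : Finset V, S.Nonempty → v₀ ∉ S →
      ∃ v ∈ S, D v < ((Finset.univ.filter fun e : E =>
        (tail e = v ∧ head e ∉ S) ∨ (head e = v ∧ tail e ∉ S)).card : ℤ)) :
    ∀ S : Finset V, v₀ ∉ S → ∃ r : List V, r.Nodup ∧ (∀ x, x ∈ r ↔ x ∈ S) ∧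
      ∀ (i : ℕ) (h : i < r.length), D (r.get ⟨i, h⟩) <
        ((Finset.univ.filter fun e : E =>
          (tail e = r.get ⟨i, h⟩ ∧ head e ∉ S \ (r.take i).toFinset) ∨
          (head e = r.get ⟨i, h⟩ ∧ tail e ∉ S \ (r.take i).toFinset)).card : ℤ) := by
  intro S
  induction S using Finset.strongInduction with
  | _ S ih =>
    intro hv₀
    by_cases hS : S.Nonempty
    · obtain ⟨v, hvS, hvlt⟩ := H S hS hv₀
      obtain ⟨r, hnd, hmem, hcond⟩ := ih (S.erase v) (Finset.erase_ssubset hvS)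
        (fun h => hv₀ (Finset.mem_of_mem_erase h))
      refine ⟨v :: r, ?_, ?_, ?_⟩
      · exact List.nodup_cons.mpr ⟨fun h => (Finset.notMem_erase v S) ((hmem v).mp h), hnd⟩
      · intro x
        simp only [List.mem_cons, hmem, Finset.mem_erase]
        constructor
        · rintro (rfl | ⟨_, h⟩)
          · exact hvS
          · exact h
        · intro hx
          by_cases hxv : x = v
          · exact Or.inl hxv
          · exact Or.inr ⟨hxv, hx⟩
      · intro i h
        match i with
        | 0 =>
          simpa using hvlt
        | j + 1 =>
          have hj : j < r.length := by simpa using h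
          have hget : (v :: r).get ⟨j + 1, h⟩ = r.get ⟨j, hj⟩ := rfl
          have htake : ((v :: r).take (j + 1)).toFinset
              = insert v (r.take j).toFinset := by
            simp [List.take_cons]
          have hsd : S \ ((v :: r).take (j + 1)).toFinset
              = S.erase v \ (r.take j).toFinset := by
            rw [htake]
            ext x
            simp only [Finset.mem_sdiff, Finset.mem_insert, Finset.mem_erase]
            tauto
          rw [hget, hsd]
          exact hcond j hj
    · refine ⟨[], by simp, ?_, by simp⟩
      rw [Finset.not_nonempty_iff_eq_empty] at hS
      simp [hS]

end Statement3Aux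

/-- a multidegree `D` on a finite loopless multigraph is concentrated at
`v₀` iff for every nonempty `S ⊆ V∖{v₀}` there is `v ∈ S` with `D v` strictly smaller
than the number of edges from `v` to `V∖S`. -/
theorem statement_3 {V E : Type*} [Fintype V] [Fintype E] [DecidableEq V] [DecidableEq E]
    (tail head : E → V) (hloop : Loopless tail head)
    (D : V → ℤ) (v₀ : V) :
    ConcentratedDiv tail head D v₀ ↔
      ∀ S : Finset V, S.Nonempty → v₀ ∉ S →
        ∃ v ∈ S, D v < ((Finset.univ.filter fun e : E =>
          (tail e = v ∧ head e ∉ S) ∨ (head e = v ∧ tail e ∉ S)).card : ℤ) := by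
  constructor
  · rintro ⟨l, hnd, hall, hhead, hneg⟩ S hS hv₀S
    obtain ⟨t, rfl⟩ : ∃ t, l = v₀ :: t := by
      cases l with
      | nil => simp at hhead
      | cons a t =>
        have ha : a = v₀ := by simpa using hhead
        exact ⟨t, by rw [ha]⟩
    set l := v₀ :: t with hl
    obtain ⟨x, hx⟩ := hS
    obtain ⟨⟨k, hk⟩, hgk⟩ := List.mem_iff_get.mp (hall x)
    have hP : ∃ i, ∃ h : i < l.length, l.get ⟨i, h⟩ ∈ S :=
      ⟨k, hk, by rw [hgk]; exact hx⟩
    obtain ⟨i, ⟨hi, hgS⟩, hmin⟩ :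
        ∃ i, (∃ h : i < l.length, l.get ⟨i, h⟩ ∈ S) ∧
          ∀ j < i, ¬ ∃ h : j < l.length, l.get ⟨j, h⟩ ∈ S :=
      ⟨Nat.find hP, Nat.find_spec hP, fun j hj => Nat.find_min hP hj⟩
    have hi0 : 0 < i := by
      by_contra h
      push_neg at h
      have hz : i = 0 := by omega
      subst hz
      exact hv₀S hgS
    set v := l.get ⟨i, hi⟩ with hv
    have htaken : (l.take i).Nodup := List.Nodup.sublist (List.take_sublist i l) hnd
    have hvnotin : v ∉ l.take i := get_not_mem_take l hnd i hi
    have hval := hneg i hi hi0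
    rw [foldl_negChipFire_val tail head (l.take i) D v htaken hvnotin] at hval
    have hnS : ∀ u ∈ l.take i, u ∉ S := by
      intro u hu huS
      obtain ⟨j, hj, hgu⟩ := List.mem_iff_getElem.mp hu
      have hji : j < i := by
        have := hj
        simp only [List.length_take] at this
        omega
      have hjl : j < l.length := lt_of_lt_of_le hji (le_of_lt hi)
      refine hmin j hji ⟨hjl, ?_⟩
      have : l[j] = u := by rw [← hgu]; exact List.getElem_take.symm
      simpa [List.get_eq_getElem, this] using huS
    have hsub : (Finset.univ.filter fun e : E =>
        (tail e = v ∧ head e ∈ l.take i) ∨ (head e = v ∧ tail e ∈ l.take i))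
        ⊆ (Finset.univ.filter fun e : E =>
          (tail e = v ∧ head e ∉ S) ∨ (head e = v ∧ tail e ∉ S)) := by
      intro e he
      simp only [Finset.mem_filter, Finset.mem_univ, true_and] at he ⊢
      rcases he with ⟨h1, h2⟩ | ⟨h1, h2⟩
      · exact Or.inl ⟨h1, hnS _ h2⟩
      · exact Or.inr ⟨h1, hnS _ h2⟩
    refine ⟨v, hgS, ?_⟩
    have hle : ((Finset.univ.filter fun e : E =>
        (tail e = v ∧ head e ∈ l.take i) ∨ (head e = v ∧ tail e ∈ l.take i)).card : ℤ)
        ≤ ((Finset.univ.filter fun e : E =>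
          (tail e = v ∧ head e ∉ S) ∨ (head e = v ∧ tail e ∉ S)).card : ℤ) := by
      exact_mod_cast Finset.card_le_card hsub
    linarith
  · intro H
    obtain ⟨r, hnd, hmem, hcond⟩ := exists_good_list tail head D v₀ H
      (Finset.univ.erase v₀) (Finset.notMem_erase v₀ _)
    have hv₀r : v₀ ∉ r := fun h => (Finset.notMem_erase v₀ _) ((hmem v₀).mp h)
    refine ⟨v₀ :: r, List.nodup_cons.mpr ⟨hv₀r, hnd⟩, ?_, rfl, ?_⟩
    · intro x
      by_cases hx : x = v₀
      · simp [hx]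
      · simp [List.mem_cons, hx,
          (hmem x).mpr (Finset.mem_erase.mpr ⟨hx, Finset.mem_univ x⟩)]
    · intro i h hi0
      obtain ⟨j, rfl⟩ : ∃ j, i = j + 1 := ⟨i - 1, by omega⟩
      have hj : j < r.length := by simpa using h
      have hget : (v₀ :: r).get ⟨j + 1, h⟩ = r.get ⟨j, hj⟩ := rfl
      set v := r.get ⟨j, hj⟩ with hvdef
      have hvr : v ∈ r := List.get_mem r _
      have hvS : v ∈ Finset.univ.erase v₀ := (hmem v).mp hvr
      have hvv₀ : v ≠ v₀ := (Finset.mem_erase.mp hvS).1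
      have htake : (v₀ :: r).take (j + 1) = v₀ :: r.take j := by
        simp [List.take_cons]
      have hnottake : v ∉ r.take j := get_not_mem_take r hnd j hj
      have hvpre : v ∉ v₀ :: r.take j := by
        simp only [List.mem_cons, not_or]
        exact ⟨hvv₀, hnottake⟩
      have hndpre : (v₀ :: r.take j).Nodup :=
        List.nodup_cons.mpr ⟨fun hh => hv₀r (List.take_subset j r hh),
          List.Nodup.sublist (List.take_sublist j r) hnd⟩
      have hiff : ∀ x : V, x ∈ (v₀ :: r.take j) ↔
          x ∉ (Finset.univ.erase v₀) \ (r.take j).toFinset := by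
        intro x
        by_cases hx : x = v₀ <;>
          simp [hx, Finset.mem_sdiff, List.mem_cons]
      have hcardeq : (Finset.univ.filter fun e : E =>
          (tail e = v ∧ head e ∈ v₀ :: r.take j) ∨
          (head e = v ∧ tail e ∈ v₀ :: r.take j))
          = (Finset.univ.filter fun e : E =>
            (tail e = v ∧ head e ∉ (Finset.univ.erase v₀) \ (r.take j).toFinset) ∨
            (head e = v ∧ tail e ∉ (Finset.univ.erase v₀) \ (r.take j).toFinset)) := by
        ext e
        simp only [Finset.mem_filter, Finset.mem_univ, true_and]
        rw [hiff (head e), hiff (tail e)]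
      rw [hget, htake,
        foldl_negChipFire_val tail head (v₀ :: r.take j) D v hndpre hvpre, hcardeq]
      have := hcond j hj
      linarith

end LLS
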